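/- Let C_i ⊆ H, i ∈ I := {1,…,M}, be closed and convex sets in a real Hilbert space H with C := ⋂_{i∈I} C_i ≠ ∅. Let U := Σ_{n=1}^{N} ω_n ∏_{j∈J_n} P_{C_j}, where each J_n ⊆ I is a string, ω_n ∈ (0,1), Σ_{n=1}^{N} ω_n = 1, and I = J_1 ∪ … ∪ J_N. Set m := max_{1≤n≤N} |J_n| and ω := min_{1≤n≤N} ω_n. If the family {C_i : i ∈ I} is κ-linearly regular over a set S ⊆ H, then for all x ∈ S one has ‖Ux − x‖ ≥ (ω/(2mκ²)) d(x,C). -/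

import Mathlib

open Metric

/-- `P` is the metric projection onto `C`. -/
def IsMetricProj {H : Type*} [NormedAddCommGroup H] (C : Set H) (P : H → H) : Prop :=
  ∀ x : H, P x ∈ C ∧ ∀ z ∈ C, ‖x - P x‖ ≤ ‖x - z‖

/-- For a string `J = (j_1, …, j_l)`, `stringProd P J = P j_l ∘ ⋯ ∘ P j_1`. -/
def stringProd {H : Type*} {M : ℕ} (P : Fin M → H → H) : List (Fin M) → H → H
  | [] => id
  | j :: J => fun x => stringProd P J (P j x)

section Aux
variable {H : Type*} [NormedAddCommGroup H] [InnerProductSpace ℝ H]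

lemma proj_sq_ineq {C : Set H} (hcv : Convex ℝ C) {P : H → H}
    (hP : IsMetricProj C P) {z : H} (hz : z ∈ C) (x : H) :
    ‖P x - z‖ ^ 2 + ‖x - P x‖ ^ 2 ≤ ‖x - z‖ ^ 2 := by
  haveI : Nonempty C := ⟨⟨P x, (hP x).1⟩⟩
  have h1 : ‖x - P x‖ = ⨅ w : C, ‖x - w‖ := by
    refine le_antisymm (le_ciInf fun w => (hP x).2 w w.2) ?_
    have hbdd : BddBelow (Set.range fun w : C => ‖x - (w : H)‖) :=
      ⟨0, by rintro b ⟨w, rfl⟩; positivity⟩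
    exact ciInf_le hbdd ⟨P x, (hP x).1⟩
  have h2 := (norm_eq_iInf_iff_real_inner_le_zero hcv (hP x).1).mp h1 z hz
  have h3 : ‖(x - P x) - (z - P x)‖ ^ 2
      = ‖x - P x‖ ^ 2 - 2 * (inner ℝ (x - P x) (z - P x) : ℝ) + ‖z - P x‖ ^ 2 :=
    norm_sub_sq_real _ _
  have h4 : (x - P x) - (z - P x) = x - z := by abel
  rw [h4] at h3
  have h5 : ‖P x - z‖ = ‖z - P x‖ := norm_sub_rev _ _
  rw [h5]
  nlinarith [h2]

variable {M : ℕ} {Cset : Fin M → Set H} (hCcv : ∀ i, Convex ℝ (Cset i))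
  {P : Fin M → H → H} (hP : ∀ i, IsMetricProj (Cset i) (P i))
  {z : H} (hz : ∀ i, z ∈ Cset i)

include hCcv hP hz

lemma fejer_string : ∀ (L : List (Fin M)) (x : H), ‖stringProd P L x - z‖ ≤ ‖x - z‖ := by
  intro L
  induction L with
  | nil => intro x; simp [stringProd]
  | cons j L ih =>
    intro x
    have h1 := proj_sq_ineq (hCcv j) (hP j) (hz j) x
    have h2 := ih (P j x)
    have h3 : ‖P j x - z‖ ≤ ‖x - z‖ := by
      nlinarith [norm_nonneg (P j x - z), norm_nonneg (x - z), norm_nonneg (x - P j x)]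
    calc ‖stringProd P (j :: L) x - z‖ = ‖stringProd P L (P j x) - z‖ := rfl
      _ ≤ ‖P j x - z‖ := h2
      _ ≤ ‖x - z‖ := h3

lemma keyB : ∀ (L : List (Fin M)) (x : H), ∀ i ∈ L,
    infDist x (Cset i) ^ 2 ≤ L.length * (‖x - z‖ ^ 2 - ‖stringProd P L x - z‖ ^ 2) := by
  intro L
  induction L with
  | nil => intro x i hi; simp at hi
  | cons j L ih =>
    intro x i hi
    set y := P j x with hy
    have hstep : ‖y - z‖ ^ 2 + ‖x - y‖ ^ 2 ≤ ‖x - z‖ ^ 2 := proj_sq_ineq (hCcv j) (hP j) (hz j) x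
    have hfe : ‖stringProd P L y - z‖ ≤ ‖y - z‖ := fejer_string hCcv hP hz L y
    have hfesq : ‖stringProd P L y - z‖ ^ 2 ≤ ‖y - z‖ ^ 2 :=
      pow_le_pow_left₀ (norm_nonneg _) hfe 2
    have hQ : stringProd P (j :: L) x = stringProd P L y := rfl
    rw [hQ, List.length_cons]
    push_cast
    rcases List.mem_cons.mp hi with rfl | hi'
    · have hymem : y ∈ Cset i := (hP i x).1
      have hd : infDist x (Cset i) ≤ ‖x - y‖ := by
        rw [← dist_eq_norm]; exact infDist_le_dist_of_mem hymem
      have hd0 : (0:ℝ) ≤ infDist x (Cset i) := infDist_nonneg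
      have hl0 : (0:ℝ) ≤ (L.length : ℝ) := Nat.cast_nonneg _
      nlinarith [mul_le_mul hd hd hd0 (norm_nonneg (x - y)),
        mul_nonneg hl0 (sub_nonneg.mpr (hfesq.trans
          (by nlinarith [sq_nonneg ‖x - y‖] : ‖y - z‖ ^ 2 ≤ ‖x - z‖ ^ 2)))]
    · have hl1 : (1:ℝ) ≤ (L.length : ℝ) := by
        have := List.length_pos_iff.mpr (List.ne_nil_of_mem hi')
        exact_mod_cast this
      have hb := ih y i hi'
      have htri : infDist x (Cset i) ≤ ‖x - y‖ + infDist y (Cset i) := by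
        have := infDist_le_infDist_add_dist (x := x) (y := y) (s := Cset i)
        rwa [dist_eq_norm, add_comm] at this
      set a := ‖x - y‖ with ha
      set b := infDist y (Cset i) with hbdef
      set d := infDist x (Cset i) with hd
      set l := (L.length : ℝ) with hl
      set A := ‖x - z‖ ^ 2 with hA
      set B := ‖stringProd P L y - z‖ ^ 2 with hB
      have hd0 : (0:ℝ) ≤ d := infDist_nonneg
      have hb0 : (0:ℝ) ≤ b := infDist_nonneg
      have ha0 : (0:ℝ) ≤ a := norm_nonneg _
      have hdsq : d ^ 2 ≤ (a + b) ^ 2 :=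
        pow_le_pow_left₀ hd0 htri 2
      have h6 : a ^ 2 + (‖y - z‖ ^ 2 - B) ≤ A - B := by nlinarith
      -- hb : b^2 ≤ l * (‖y - z‖^2 - B)
      have hc0 : (0:ℝ) ≤ ‖y - z‖ ^ 2 - B := by nlinarith
      nlinarith [sq_nonneg (l * a - b), mul_le_mul_of_nonneg_left hb (by linarith : (0:ℝ) ≤ l),
        mul_le_mul_of_nonneg_left h6 (by linarith : (0:ℝ) ≤ l),
        mul_le_mul_of_nonneg_left hdsq (by linarith : (0:ℝ) ≤ l), hb, hc0]

end Aux

set_option maxHeartbeats 1000000 in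
/-- If the family `{C_i : i ∈ I}` is `κ`-linearly regular over `S ⊆ H`, then the string
averaging projection operator `U = Σ_{n=1}^{N} ω_n ∏_{j ∈ J_n} P_{C_j}` satisfies
`‖Ux − x‖ ≥ (ω/(2mκ²)) d(x,C)` for all `x ∈ S`, where `m = max_n |J_n|`, `ω = min_n ω_n`. -/
theorem stmt4 {H : Type*} [NormedAddCommGroup H] [InnerProductSpace ℝ H] [CompleteSpace H]
    {M N : ℕ} [NeZero M] [NeZero N]
    (Cset : Fin M → Set H) (hCcl : ∀ i, IsClosed (Cset i)) (hCcv : ∀ i, Convex ℝ (Cset i))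
    (hCne : (⋂ i, Cset i).Nonempty)
    (P : Fin M → H → H) (hP : ∀ i, IsMetricProj (Cset i) (P i))
    (J : Fin N → List (Fin M)) (w : Fin N → ℝ)
    (hw : ∀ n, w n ∈ Set.Ioo (0 : ℝ) 1) (hws : ∑ n, w n = 1)
    (hcover : ∀ i : Fin M, ∃ n, i ∈ J n)
    (U : H → H) (hU : ∀ y, U y = ∑ n, w n • stringProd P (J n) y)
    (m : ℕ) (hm : m = Finset.univ.sup fun n => (J n).length)
    (ω : ℝ) (hω : ω = ⨅ n, w n)
    (S : Set H) (κ : ℝ) (hκ : 0 < κ)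
    (hreg : ∀ x ∈ S, infDist x (⋂ i, Cset i) ≤ κ * ⨆ i, infDist x (Cset i)) :
    ∀ x ∈ S, ω / (2 * (m : ℝ) * κ ^ 2) * infDist x (⋂ i, Cset i) ≤ ‖U x - x‖ := by
  intro x hx
  obtain ⟨z, hzC, hznorm⟩ : ∃ z ∈ ⋂ i, Cset i, ‖x - z‖ = infDist x (⋂ i, Cset i) := by
    obtain ⟨z, hz, he⟩ := exists_norm_eq_iInf_of_complete_convex hCne
      ((isClosed_iInter hCcl).isComplete) (convex_iInter fun i => hCcv i) x
    refine ⟨z, hz, ?_⟩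
    haveI : Nonempty (⋂ i, Cset i) := hCne.to_subtype
    rw [he, infDist_eq_iInf]
    simp_rw [dist_eq_norm]
  have hzAll : ∀ i, z ∈ Cset i := fun i => Set.mem_iInter.mp hzC i
  -- facts about ω
  obtain ⟨n1, hn1⟩ := Finite.exists_min w
  have hωeq : ω = w n1 := by
    rw [hω]
    exact le_antisymm (ciInf_le (Finite.bddBelow_range w) n1) (le_ciInf hn1)
  have hωpos : 0 < ω := hωeq ▸ (hw n1).1
  have hωle : ∀ n, ω ≤ w n := fun n => hωeq ▸ hn1 n
  -- facts about m
  have hmlen : ∀ n, ((J n).length : ℝ) ≤ (m : ℝ) := fun n => by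
    exact_mod_cast hm ▸ Finset.le_sup (f := fun n => (J n).length) (Finset.mem_univ n)
  have hm1 : (1 : ℝ) ≤ (m : ℝ) := by
    obtain ⟨n, hn⟩ := hcover ⟨0, Nat.pos_of_ne_zero (NeZero.ne M)⟩
    have h1 : (1 : ℝ) ≤ ((J n).length : ℝ) := by
      exact_mod_cast List.length_pos_iff.mpr (List.ne_nil_of_mem hn)
    exact h1.trans (hmlen n)
  -- pick i0 realizing the sup, and a string containing it
  obtain ⟨i0, hi0⟩ := Finite.exists_max (fun i => infDist x (Cset i))
  have hsup_le : (⨆ i, infDist x (Cset i)) ≤ infDist x (Cset i0) := ciSup_le hi0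
  have hdi0 : infDist x (⋂ i, Cset i) ≤ κ * infDist x (Cset i0) :=
    (hreg x hx).trans (mul_le_mul_of_nonneg_left hsup_le hκ.le)
  obtain ⟨n0, hn0⟩ := hcover i0
  -- the inner-product quantities
  set T : Fin N → ℝ := fun n => (inner ℝ (x - stringProd P (J n) x) (x - z) : ℝ) with hT
  have hTlb : ∀ n, (‖x - z‖ ^ 2 - ‖stringProd P (J n) x - z‖ ^ 2) / 2 ≤ T n := by
    intro n
    have h3 : ‖(x - z) - (x - stringProd P (J n) x)‖ ^ 2 = ‖x - z‖ ^ 2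
        - 2 * (inner ℝ (x - z) (x - stringProd P (J n) x) : ℝ)
        + ‖x - stringProd P (J n) x‖ ^ 2 := norm_sub_sq_real _ _
    have h4 : (x - z) - (x - stringProd P (J n) x) = stringProd P (J n) x - z := by abel
    rw [h4] at h3
    have h5 : (inner ℝ (x - z) (x - stringProd P (J n) x) : ℝ) = T n := real_inner_comm _ _
    nlinarith [sq_nonneg ‖x - stringProd P (J n) x‖]
  have hfsq : ∀ n, ‖stringProd P (J n) x - z‖ ^ 2 ≤ ‖x - z‖ ^ 2 := fun n =>
    pow_le_pow_left₀ (norm_nonneg _) (fejer_string hCcv hP hzAll (J n) x) 2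
  have hTnn : ∀ n, 0 ≤ T n := fun n => le_trans (by nlinarith [hfsq n]) (hTlb n)
  -- sum identity and upper bound
  have hsum_ub : ∑ n, w n * T n ≤ ‖U x - x‖ * ‖x - z‖ := by
    have hid : ∑ n, w n * T n = (inner ℝ (x - U x) (x - z) : ℝ) := by
      have hx1 : x - U x = ∑ n, w n • (x - stringProd P (J n) x) := by
        rw [hU]
        simp only [smul_sub, Finset.sum_sub_distrib, ← Finset.sum_smul, hws, one_smul]
      rw [hx1, sum_inner]
      simp [real_inner_smul_left, hT]
    rw [hid]
    calc (inner ℝ (x - U x) (x - z) : ℝ) ≤ ‖x - U x‖ * ‖x - z‖ := real_inner_le_norm _ _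
      _ = ‖U x - x‖ * ‖x - z‖ := by rw [norm_sub_rev]
  have hsum_lb : w n0 * T n0 ≤ ∑ n, w n * T n :=
    Finset.single_le_sum (fun n _ => mul_nonneg (hw n).1.le (hTnn n)) (Finset.mem_univ n0)
  -- key estimate at n0
  have hkey := keyB hCcv hP hzAll (J n0) x i0 hn0
  have hTn0 : infDist x (Cset i0) ^ 2 ≤ 2 * (m : ℝ) * T n0 := by
    have h1 := hTlb n0
    have h2 := hfsq n0
    have h3 := hmlen n0
    nlinarith [Nat.cast_nonneg (α := ℝ) (J n0).length]
  -- assemble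
  set d := infDist x (⋂ i, Cset i) with hd
  have hd0 : (0:ℝ) ≤ d := infDist_nonneg
  have hdi00 : (0:ℝ) ≤ infDist x (Cset i0) := infDist_nonneg
  have step1 : ω * T n0 ≤ ‖U x - x‖ * d := by
    have := mul_le_mul_of_nonneg_right (hωle n0) (hTnn n0)
    rw [hznorm] at hsum_ub
    linarith [hsum_lb]
  have step2 : ω * infDist x (Cset i0) ^ 2 ≤ 2 * (m : ℝ) * (‖U x - x‖ * d) := by
    nlinarith [mul_le_mul_of_nonneg_left hTn0 hωpos.le, step1, hm1]
  have step3 : d ^ 2 ≤ κ ^ 2 * infDist x (Cset i0) ^ 2 := by nlinarith [hdi0, hd0, hdi00, hκ]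
  have step4 : ω * d ^ 2 ≤ 2 * (m : ℝ) * κ ^ 2 * (‖U x - x‖ * d) := by
    nlinarith [mul_le_mul_of_nonneg_left step3 hωpos.le,
      mul_le_mul_of_nonneg_left step2 (sq_nonneg κ)]
  have hc : (0:ℝ) < 2 * (m : ℝ) * κ ^ 2 := by positivity
  rcases eq_or_lt_of_le hd0 with h0 | h0
  · rw [← h0, mul_zero]
    exact norm_nonneg _
  · rw [div_mul_eq_mul_div, div_le_iff₀ hc]
    have h5 : ω * d * d ≤ ‖U x - x‖ * (2 * (m : ℝ) * κ ^ 2) * d := by nlinarith [step4]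
    exact le_of_mul_le_mul_right h5 h0
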